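/- Let G be a finite simple graph, let k ∈ ℕ, and let U ⊆ V(G) be a well-linked set with |U| > 3k. Then for every k-flip G′ of G, there are at most k vertices v ∈ U with the property that at most k vertices u ∈ U are reachable from v in G′ (reachability includes v itself). In other words, every well-linked set of size greater than 3k is an (∞,k,k)-hideout. -/

import Mathlib

/-- A `k`-flip of a graph `G`: there exist a coloring `c : V → Fin k` and a symmetric
relation `F` on `Fin k` such that distinct vertices `u, v` are adjacent in `G'` iff
exactly one of `G.Adj u v` and `F (c u) (c v)` holds. -/
def IsKFlip {V : Type*} (k : ℕ) (G G' : SimpleGraph V) : Prop :=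
  ∃ (c : V → Fin k) (F : Fin k → Fin k → Prop), Symmetric F ∧
    ∀ u v : V, u ≠ v → (G'.Adj u v ↔ Xor' (G.Adj u v) (F (c u) (c v)))

/-- The cut-rank of a pair of vertex sets `A, B` in a graph `G`: the rank over `GF(2)`
of the `A × B` matrix whose `(a, b)` entry is `1` iff `ab` is an edge of `G`. -/
noncomputable def cutRank {V : Type*} (G : SimpleGraph V) [DecidableRel G.Adj]
    (A B : Finset V) : ℕ :=
  (Matrix.of fun (a : A) (b : B) => if G.Adj a.1 b.1 then (1 : ZMod 2) else 0).rank

open Classical in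
/-- The union of a finite set of connected components of `G'`, as a `Finset`. -/
noncomputable def domF {V : Type*} [Fintype V] (G' : SimpleGraph V)
    (D : Finset G'.ConnectedComponent) : Finset V :=
  Finset.univ.filter (fun v => G'.connectedComponentMk v ∈ D)

lemma mem_domF {V : Type*} [Fintype V] {G' : SimpleGraph V}
    {D : Finset G'.ConnectedComponent} {v : V} :
    v ∈ domF G' D ↔ G'.connectedComponentMk v ∈ D := by
  simp [domF]

/-- If there are no `G'`-edges between `A` and `B` and `G'` is a `k`-flip of `G`,
then the cut-rank of `(A, B)` in `G` is at most `k`. -/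
lemma cutRank_le_of_sep {V : Type*} [Fintype V] [DecidableEq V]
    (G : SimpleGraph V) [DecidableRel G.Adj] (G' : SimpleGraph V) (k : ℕ)
    (hflip : IsKFlip k G G') (A B : Finset V) (hdisj : Disjoint A B)
    (hsep : ∀ a ∈ A, ∀ b ∈ B, ¬ G'.Adj a b) : cutRank G A B ≤ k := by
  classical
  obtain ⟨c, F, hFsym, hadj⟩ := hflip
  let P : Matrix A (Fin k) (ZMod 2) := Matrix.of fun a i => if c a.1 = i then 1 else 0
  let Q : Matrix (Fin k) B (ZMod 2) := Matrix.of fun i b => if F i (c b.1) then 1 else 0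
  have hM : (Matrix.of fun (a : A) (b : B) =>
      if G.Adj a.1 b.1 then (1 : ZMod 2) else 0) = P * Q := by
    ext a b
    have hne : a.1 ≠ b.1 := by
      intro h
      exact (Finset.disjoint_left.mp hdisj) a.2 (h ▸ b.2)
    have h1 : ¬ G'.Adj a.1 b.1 := hsep a.1 a.2 b.1 b.2
    have h2 : G.Adj a.1 b.1 ↔ F (c a.1) (c b.1) := by
      have h := hadj a.1 b.1 hne
      simp only [Xor', xor_def] at h
      tauto
    have hrhs : (P * Q) a b = if F (c a.1) (c b.1) then (1 : ZMod 2) else 0 := by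
      simp only [Matrix.mul_apply, P, Q, Matrix.of_apply, ite_mul, one_mul, zero_mul]
      rw [Finset.sum_ite_eq]
      simp
    rw [hrhs]
    simp only [Matrix.of_apply]
    exact if_congr h2 rfl rfl
  calc cutRank G A B = (P * Q).rank := by rw [cutRank, hM]
    _ ≤ Q.rank := Matrix.rank_mul_le_right P Q
    _ ≤ Fintype.card (Fin k) := Matrix.rank_le_card_height Q
    _ = k := Fintype.card_fin k

/-- Every well-linked set `U` with `|U| > 3k` is an `(∞, k, k)`-hideout: for every
`k`-flip `G'` of `G`, at most `k` vertices `v ∈ U` can reach at most `k` vertices of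
`U` in `G'` (reachability includes `v` itself). -/
theorem stmt8 {V : Type*} [Fintype V] [DecidableEq V]
    (G : SimpleGraph V) [DecidableRel G.Adj] (k : ℕ)
    (U : Finset V) (hU : 3 * k < U.card)
    (hwl : ∀ A B : Finset V, Disjoint A B → A ∪ B = Finset.univ →
      min (A ∩ U).card (B ∩ U).card ≤ cutRank G A B)
    (G' : SimpleGraph V) (hflip : IsKFlip k G G') :
    {v : V | v ∈ U ∧ {u : V | u ∈ U ∧ G'.Reachable v u}.ncard ≤ k}.ncard ≤ k := by
  classical
  by_contra hcon
  push_neg at hcon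
  set S : Set V := {v : V | v ∈ U ∧ {u : V | u ∈ U ∧ G'.Reachable v u}.ncard ≤ k} with hSdef
  have hSfin : S.Finite := Set.toFinite S
  have hcard : k + 1 ≤ hSfin.toFinset.card := by
    rw [← Set.ncard_eq_toFinset_card _ hSfin]
    omega
  obtain ⟨T, hTsub, hTcard⟩ := Finset.exists_subset_card_eq hcard
  have hTmem : ∀ v ∈ T, v ∈ S := fun v hv => hSfin.mem_toFinset.mp (hTsub hv)
  -- each component of a vertex of `T` meets `U` in at most `k` vertices
  have hsingle : ∀ v ∈ T, ((domF G' {G'.connectedComponentMk v}) ∩ U).card ≤ k := by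
    intro v hv
    have hvS := hTmem v hv
    have hset : ((domF G' {G'.connectedComponentMk v} ∩ U : Finset V) : Set V)
        = {u : V | u ∈ U ∧ G'.Reachable v u} := by
      ext u
      simp only [Finset.coe_inter, Set.mem_inter_iff, Finset.mem_coe, mem_domF,
        Finset.mem_singleton, SimpleGraph.ConnectedComponent.eq, Set.mem_setOf_eq]
      constructor
      · rintro ⟨h1, h2⟩; exact ⟨h2, h1.symm⟩
      · rintro ⟨h1, h2⟩; exact ⟨h2.symm, h1⟩
    calc ((domF G' {G'.connectedComponentMk v}) ∩ U).card
        = ((domF G' {G'.connectedComponentMk v} ∩ U : Finset V) : Set V).ncard :=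
          (Set.ncard_coe_finset _).symm
      _ ≤ k := by rw [hset]; exact hvS.2
  -- subadditivity of the `U`-trace over unions of component families
  have hsub : ∀ (C : G'.ConnectedComponent) (D : Finset G'.ConnectedComponent),
      ((domF G' (insert C D)) ∩ U).card ≤
        ((domF G' {C}) ∩ U).card + ((domF G' D) ∩ U).card := by
    intro C D
    have h : domF G' (insert C D) ∩ U ⊆ (domF G' {C} ∩ U) ∪ (domF G' D ∩ U) := by
      intro u hu
      simp only [Finset.mem_inter, mem_domF, Finset.mem_insert, Finset.mem_union,
        Finset.mem_singleton] at *
      tauto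
    calc ((domF G' (insert C D)) ∩ U).card
        ≤ ((domF G' {C} ∩ U) ∪ (domF G' D ∩ U)).card := Finset.card_le_card h
      _ ≤ _ := Finset.card_union_le _ _
  set comps := T.image (G'.connectedComponentMk) with hcomps
  have hTtot : k + 1 ≤ ((domF G' comps) ∩ U).card := by
    have hsubT : T ⊆ domF G' comps ∩ U := by
      intro v hv
      exact Finset.mem_inter.mpr
        ⟨mem_domF.mpr (Finset.mem_image_of_mem _ hv), (hTmem v hv).1⟩
    calc k + 1 = T.card := hTcard.symm
      _ ≤ _ := Finset.card_le_card hsubT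
  -- greedy: a maximal subfamily `D ⊆ comps` whose union meets `U` in ≤ k vertices
  set 𝒟 := (comps.powerset).filter
      (fun D => ((domF G' D) ∩ U).card ≤ k) with h𝒟
  have hne : 𝒟.Nonempty := by
    refine ⟨∅, Finset.mem_filter.mpr ⟨Finset.empty_mem_powerset _, ?_⟩⟩
    have : domF G' (∅ : Finset G'.ConnectedComponent) = ∅ := by
      ext u; simp [mem_domF]
    simp [this]
  obtain ⟨D, hD, hDmax⟩ := Finset.exists_max_image 𝒟 Finset.card hne
  have hDsub : D ⊆ comps := Finset.mem_powerset.mp (Finset.mem_filter.mp hD).1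
  have hDle : ((domF G' D) ∩ U).card ≤ k := (Finset.mem_filter.mp hD).2
  have hDne : D ≠ comps := by
    rintro rfl; omega
  obtain ⟨C, hCc, hCD⟩ : ∃ C ∈ comps, C ∉ D := by
    by_contra h
    push_neg at h
    exact hDne (Finset.Subset.antisymm hDsub h)
  have hins : insert C D ∉ 𝒟 := by
    intro h
    have := hDmax _ h
    rw [Finset.card_insert_of_notMem hCD] at this
    omega
  have hinsSub : insert C D ⊆ comps := Finset.insert_subset hCc hDsub
  have hbig : k < ((domF G' (insert C D)) ∩ U).card := by
    by_contra h
    push_neg at h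
    exact hins (Finset.mem_filter.mpr ⟨Finset.mem_powerset.mpr hinsSub, h⟩)
  obtain ⟨v, hvT, hveq⟩ := Finset.mem_image.mp hCc
  have hCk : ((domF G' {C}) ∩ U).card ≤ k := hveq ▸ hsingle v hvT
  have hA2k : ((domF G' (insert C D)) ∩ U).card ≤ 2 * k := by
    have := hsub C D; omega
  set A := domF G' (insert C D) with hA
  have hBU : (Aᶜ ∩ U).card = U.card - (A ∩ U).card := by
    have h1 : Aᶜ ∩ U = U \ (A ∩ U) := by
      ext u
      simp only [Finset.mem_inter, Finset.mem_compl, Finset.mem_sdiff]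
      tauto
    rw [h1, Finset.card_sdiff_of_subset Finset.inter_subset_right]
  have hAUle : (A ∩ U).card ≤ U.card := Finset.card_le_card Finset.inter_subset_right
  have hBk : k < (Aᶜ ∩ U).card := by omega
  have hrk : cutRank G A Aᶜ ≤ k := by
    apply cutRank_le_of_sep G G' k hflip _ _ disjoint_compl_right
    intro a ha b hb hadj'
    have hcc : G'.connectedComponentMk a = G'.connectedComponentMk b :=
      SimpleGraph.ConnectedComponent.sound hadj'.reachable
    have hbA : b ∈ A := mem_domF.mpr (hcc ▸ mem_domF.mp ha)
    exact (Finset.mem_compl.mp hb) hbA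
  have hmin : k < min (A ∩ U).card (Aᶜ ∩ U).card := lt_min hbig hBk
  have := hwl A Aᶜ disjoint_compl_right (Finset.union_compl A)
  omega
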